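/- Let $s\le 0$, $j\in\mathbb{R}^d\setminus\{0\}$. There is a constant $C=C(j,s)$ independent of $p,q\in[1,\infty]$ and $\varepsilon\in(0,1]$ such that for all $f\in\mathcal{S}(\mathbb{R}^d)$, $\|f(\cdot)e^{ij\cdot x/\varepsilon}\|_{M^{p,q}_s}\le C\,\varepsilon^{|s|}\,\|f\|_{M^{p,q}_{|s|}}$. -/

import Mathlib

open MeasureTheory
open scoped RealInnerProductSpace ENNReal

noncomputable section

/-- The short-time Fourier transform
`V_g f(x,y) = ∫ f(t) conj(g(t-x)) e^{-iy⋅t} dt`. -/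
def STFT (d : ℕ) (g f : EuclideanSpace ℝ (Fin d) → ℂ)
    (x y : EuclideanSpace ℝ (Fin d)) : ℂ :=
  ∫ t, f t * (starRingEnd ℂ) (g (t - x)) * Complex.exp (-(Complex.I * ((⟪y, t⟫ : ℝ) : ℂ)))

/-- The modulation space norm
`‖f‖_{M^{p,q}_s} = ‖ ‖V_g f(x,y)‖_{L^p_x} ⟨y⟩^s ‖_{L^q_y}`. -/
def Mnorm (d : ℕ) (g : EuclideanSpace ℝ (Fin d) → ℂ) (p q : ℝ≥0∞) (s : ℝ)
    (f : EuclideanSpace ℝ (Fin d) → ℂ) : ℝ≥0∞ :=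
  eLpNorm (fun y : EuclideanSpace ℝ (Fin d) =>
    (eLpNorm (fun x => STFT d g f x y) p volume).toReal * (1 + ‖y‖ ^ 2) ^ (s / 2)) q volume

/-- Translation invariance of `eLpNorm` on Euclidean space (no measurability needed). -/
lemma eLpNorm_sub_right_aux (d : ℕ) (G : EuclideanSpace ℝ (Fin d) → ℝ)
    (v : EuclideanSpace ℝ (Fin d)) (q : ℝ≥0∞) :
    eLpNorm (fun y => G (y - v)) q volume = eLpNorm G q volume := by
  have h := (MeasurableEquiv.subRight v).measurableEmbedding.eLpNorm_map_measure (g := G) (p := q)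
    (μ := (volume : Measure (EuclideanSpace ℝ (Fin d))))
  have hmap : Measure.map (⇑(MeasurableEquiv.subRight v))
      (volume : Measure (EuclideanSpace ℝ (Fin d))) = volume := by
    have := (measurePreserving_sub_right (volume : Measure (EuclideanSpace ℝ (Fin d))) v).map_eq
    exact this
  rw [hmap] at h
  exact h.symm

/-- The covariance of the STFT under modulation. -/
lemma STFT_modulation (d : ℕ) (g f : EuclideanSpace ℝ (Fin d) → ℂ)
    (j x y : EuclideanSpace ℝ (Fin d)) (ε : ℝ) (hε : 0 < ε) :
    STFT d g (fun x => f x * Complex.exp (Complex.I * ((⟪j, x⟫ / ε : ℝ) : ℂ))) x y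
      = STFT d g f x (y - ε⁻¹ • j) := by
  unfold STFT
  congr 1
  funext t
  have hin : ⟪y - ε⁻¹ • j, t⟫ = ⟪y, t⟫ - ε⁻¹ * ⟪j, t⟫ := by
    rw [inner_sub_left, real_inner_smul_left]
  rw [hin]
  have hexp : Complex.exp (Complex.I * ((⟪j, t⟫ / ε : ℝ) : ℂ)) *
      Complex.exp (-(Complex.I * ((⟪y, t⟫ : ℝ) : ℂ))) =
      Complex.exp (-(Complex.I * (((⟪y, t⟫ - ε⁻¹ * ⟪j, t⟫ : ℝ)) : ℂ))) := by
    rw [← Complex.exp_add]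
    congr 1
    push_cast
    have : (ε : ℂ) ≠ 0 := by exact_mod_cast hε.ne'
    field_simp
    ring
  calc f t * Complex.exp (Complex.I * ((⟪j, t⟫ / ε : ℝ) : ℂ)) * (starRingEnd ℂ) (g (t - x)) *
        Complex.exp (-(Complex.I * ((⟪y, t⟫ : ℝ) : ℂ)))
      = f t * (starRingEnd ℂ) (g (t - x)) *
        (Complex.exp (Complex.I * ((⟪j, t⟫ / ε : ℝ) : ℂ)) *
          Complex.exp (-(Complex.I * ((⟪y, t⟫ : ℝ) : ℂ)))) := by ring
    _ = _ := by rw [hexp]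

/-- Peetre-type weight inequality. -/
lemma peetre_weight_aux (d : ℕ) (s : ℝ) (hs : s ≤ 0) (j : EuclideanSpace ℝ (Fin d)) (hj : j ≠ 0)
    (ε : ℝ) (hε : 0 < ε) (y : EuclideanSpace ℝ (Fin d)) :
    (1 + ‖y‖ ^ 2) ^ (s / 2) ≤
      ((2 : ℝ) ^ (|s| / 2) * ‖j‖ ^ (-|s|) * ε ^ |s|) * (1 + ‖y - ε⁻¹ • j‖ ^ 2) ^ (|s| / 2) := by
  set v := ε⁻¹ • j with hv
  set r := |s| / 2 with hrdef
  have hr : 0 ≤ r := by positivity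
  set a := 1 + ‖y‖ ^ 2 with hadef
  set b := 1 + ‖y - v‖ ^ 2 with hbdef
  have ha : 0 < a := by positivity
  have hb : 0 < b := by positivity
  have hjn : 0 < ‖j‖ := norm_pos_iff.2 hj
  have hvy : ‖v‖ ≤ ‖y‖ + ‖y - v‖ := by
    calc ‖v‖ = ‖y - (y - v)‖ := by rw [sub_sub_cancel]
      _ ≤ ‖y‖ + ‖y - v‖ := norm_sub_le _ _
  have h2 : ‖v‖ ^ 2 ≤ 2 * a * b := by
    nlinarith [norm_nonneg v, norm_nonneg y, norm_nonneg (y - v),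
      sq_nonneg (‖y‖ - ‖y - v‖), sq_nonneg (‖y‖ * ‖y - v‖)]
  have h3 : ‖v‖ ^ |s| ≤ (2 : ℝ) ^ r * a ^ r * b ^ r := by
    have e1 : ‖v‖ ^ |s| = (‖v‖ ^ 2) ^ r := by
      rw [← Real.rpow_natCast ‖v‖ 2, ← Real.rpow_mul (norm_nonneg v)]
      norm_num [hrdef]
      rw [mul_div_cancel₀]; norm_num
    rw [e1]
    calc (‖v‖ ^ 2) ^ r ≤ (2 * a * b) ^ r := Real.rpow_le_rpow (by positivity) h2 hr
      _ = (2 : ℝ) ^ r * a ^ r * b ^ r := by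
          rw [Real.mul_rpow (by positivity) hb.le, Real.mul_rpow (by norm_num) ha.le]
  have hvn : ‖v‖ ^ |s| = ε ^ (-|s|) * ‖j‖ ^ |s| := by
    rw [hv, norm_smul, norm_inv, Real.norm_eq_abs, abs_of_pos hε,
      Real.mul_rpow (by positivity) (norm_nonneg j), ← Real.rpow_neg_one ε,
      ← Real.rpow_mul hε.le]
    ring_nf
  have key : 1 ≤ (((2 : ℝ) ^ r * ‖j‖ ^ (-|s|) * ε ^ |s|) * b ^ r) * a ^ r := by
    have h4 : ε ^ (-|s|) * ‖j‖ ^ |s| ≤ (2 : ℝ) ^ r * a ^ r * b ^ r := hvn ▸ h3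
    have h5 := mul_le_mul_of_nonneg_left h4
      (show (0:ℝ) ≤ ε ^ |s| * ‖j‖ ^ (-|s|) by positivity)
    have h6 : ε ^ |s| * ‖j‖ ^ (-|s|) * (ε ^ (-|s|) * ‖j‖ ^ |s|) = 1 := by
      rw [Real.rpow_neg hε.le, Real.rpow_neg hjn.le]
      field_simp
    calc (1:ℝ) = ε ^ |s| * ‖j‖ ^ (-|s|) * (ε ^ (-|s|) * ‖j‖ ^ |s|) := h6.symm
      _ ≤ ε ^ |s| * ‖j‖ ^ (-|s|) * ((2 : ℝ) ^ r * a ^ r * b ^ r) := h5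
      _ = (((2 : ℝ) ^ r * ‖j‖ ^ (-|s|) * ε ^ |s|) * b ^ r) * a ^ r := by ring
  have hs2 : s / 2 = -r := by rw [hrdef, abs_of_nonpos hs]; ring
  rw [hs2, Real.rpow_neg ha.le, ← one_div, div_le_iff₀ (by positivity)]
  exact key

/-- For `j ≠ 0` and `s ≤ 0`, the modulation `f e^{ij·x/ε}` loses a factor `ε^{|s|}`
in modulation spaces, uniformly in `p, q ∈ [1,∞]` and `ε ∈ (0,1]`. -/
theorem modulation_space_modulation_decay (d : ℕ) (hd : 1 ≤ d) (s : ℝ) (hs : s ≤ 0)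
    (j : EuclideanSpace ℝ (Fin d)) (hj : j ≠ 0)
    (g : SchwartzMap (EuclideanSpace ℝ (Fin d)) ℂ) (hg : (g : EuclideanSpace ℝ (Fin d) → ℂ) ≠ 0) :
    ∃ C : ℝ, 0 < C ∧ ∀ p q : ℝ≥0∞, 1 ≤ p → 1 ≤ q → ∀ ε : ℝ, ε ∈ Set.Ioc (0 : ℝ) 1 →
      ∀ f : SchwartzMap (EuclideanSpace ℝ (Fin d)) ℂ,
        Mnorm d (fun x => g x) p q s
            (fun x => f x * Complex.exp (Complex.I * ((⟪j, x⟫ / ε : ℝ) : ℂ))) ≤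
          ENNReal.ofReal (C * ε ^ |s|) * Mnorm d (fun x => g x) p q |s| (fun x => f x) := by
  have hjn : 0 < ‖j‖ := norm_pos_iff.2 hj
  refine ⟨(2 : ℝ) ^ (|s| / 2) * ‖j‖ ^ (-|s|), by positivity, ?_⟩
  intro p q hp hq ε hε f
  obtain ⟨hε0, hε1⟩ := hε
  set C := (2 : ℝ) ^ (|s| / 2) * ‖j‖ ^ (-|s|) with hC
  have hCε : 0 ≤ C * ε ^ |s| := by positivity
  set v := ε⁻¹ • j with hv
  set F : EuclideanSpace ℝ (Fin d) → ℝ := fun y =>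
    (eLpNorm (fun x => STFT d (fun x => g x) (fun x => f x) x y) p volume).toReal with hF
  set G : EuclideanSpace ℝ (Fin d) → ℝ := fun y => F y * (1 + ‖y‖ ^ 2) ^ (|s| / 2) with hG
  have hFnn : ∀ y, 0 ≤ F y := fun y => ENNReal.toReal_nonneg
  -- rewrite the STFT of the modulated function
  have hstft : ∀ y : EuclideanSpace ℝ (Fin d),
      (fun x => STFT d (fun x => g x)
        (fun x => f x * Complex.exp (Complex.I * ((⟪j, x⟫ / ε : ℝ) : ℂ))) x y)
      = fun x => STFT d (fun x => g x) (fun x => f x) x (y - v) := by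
    intro y; funext x
    exact STFT_modulation d (fun x => g x) (fun x => f x) j x y ε hε0
  have step1 : Mnorm d (fun x => g x) p q s
      (fun x => f x * Complex.exp (Complex.I * ((⟪j, x⟫ / ε : ℝ) : ℂ)))
      = eLpNorm (fun y => F (y - v) * (1 + ‖y‖ ^ 2) ^ (s / 2)) q volume := by
    unfold Mnorm
    congr 1
    funext y
    rw [hstft y]
  -- pointwise bound
  have step2 : eLpNorm (fun y => F (y - v) * (1 + ‖y‖ ^ 2) ^ (s / 2)) q volume ≤
      eLpNorm (fun y => (C * ε ^ |s|) * G (y - v)) q volume := by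
    apply eLpNorm_mono
    intro y
    have h1 : 0 ≤ F (y - v) * (1 + ‖y‖ ^ 2) ^ (s / 2) := by
      have := hFnn (y - v); positivity
    have h2 : 0 ≤ (C * ε ^ |s|) * G (y - v) := by
      have := hFnn (y - v)
      have : 0 ≤ G (y - v) := by rw [hG]; positivity
      positivity
    rw [Real.norm_eq_abs, Real.norm_eq_abs, abs_of_nonneg h1, abs_of_nonneg h2]
    have hp := peetre_weight_aux d s hs j hj ε hε0 y
    calc F (y - v) * (1 + ‖y‖ ^ 2) ^ (s / 2)
        ≤ F (y - v) * ((C * ε ^ |s|) * (1 + ‖y - v‖ ^ 2) ^ (|s| / 2)) :=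
          mul_le_mul_of_nonneg_left (by rw [hC]; exact hp) (hFnn (y - v))
      _ = (C * ε ^ |s|) * G (y - v) := by rw [hG]; ring
  -- pull out the constant and undo the translation
  have step3 : eLpNorm (fun y => (C * ε ^ |s|) * G (y - v)) q volume =
      ENNReal.ofReal (C * ε ^ |s|) * eLpNorm (fun y => G (y - v)) q volume := by
    have : (fun y => (C * ε ^ |s|) * G (y - v)) =
        (C * ε ^ |s|) • (fun y => G (y - v)) := by
      funext y; simp [smul_eq_mul]
    rw [this, eLpNorm_const_smul]
    congr 1
    rw [← ofReal_norm, Real.norm_eq_abs, abs_of_nonneg hCε]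
  have step4 : eLpNorm (fun y => G (y - v)) q volume = eLpNorm G q volume :=
    eLpNorm_sub_right_aux d G v q
  have step5 : eLpNorm G q volume = Mnorm d (fun x => g x) p q |s| (fun x => f x) := rfl
  rw [step1]
  refine step2.trans ?_
  rw [step3, step4, step5]
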